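/- arXiv:2604.00967 — 7 statements merged into one kernel-verified Lean document; each statement's English description precedes it below -/
import Mathlib

section
/- In any DS_n-frame satisfying D3 (R_{⊗_i} ⊆ R_□) and D5 (for every w there exists v with R_{⊗_i} w v such that every R_{[i]}-successor of v is an R_{⊗_i}-successor of w), the formula ⊗_i φ → ◇[i]φ (Ought implies Ability) is valid: if φ holds at every R_{⊗_i}-successor of w, then there exists an R_□-successor v of w such that φ holds at every R_{[i]}-successor of v. -/
/-- A DS_n-frame: W nonempty, R_□ an equivalence relation, each R_{[i]} an
equivalence sub-relation of R_□, independence of agents (C3), and D1. -/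
structure DSFrame (Ag W : Type) where
  nonempty : Nonempty W
  RBox : W → W → Prop
  RCh : Ag → W → W → Prop
  ROb : Ag → W → W → Prop
  box_equiv : Equivalence RBox
  ch_sub : ∀ i w v, RCh i w v → RBox w v
  ch_equiv : ∀ i, Equivalence (RCh i)
  indep : ∀ (w : W) (u : Ag → W), (∀ i, RBox w (u i)) → ∃ z, ∀ i, RCh i (u i) z
  d1 : ∀ i w v u, RBox w v → ROb i w u → ROb i v u

theorem OiA {Ag W : Type} (F : DSFrame Ag W) (i : Ag)
    (D3 : ∀ w v, F.ROb i w v → F.RBox w v)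
    (D5 : ∀ w, ∃ v, F.ROb i w v ∧ ∀ u, F.RCh i v u → F.ROb i w u)
    (φ : W → Prop) (w : W)
    (h : ∀ u, F.ROb i w u → φ u) :
    ∃ v, F.RBox w v ∧ ∀ u, F.RCh i v u → φ u := by
  obtain ⟨v, hv, hv2⟩ := D5 w
  exact ⟨v, D3 w v hv, fun u hu => h u (hv2 u hu)⟩
end

section
/- In any DS_n-frame, the formula ⊗_i^d φ → ◇[i]¬[i]φ (Ought implies Refrainability) is valid, where ⊗_i^d φ abbreviates ⊗_i φ ∧ ◇¬φ. That is, if all R_{⊗_i}-successors of w satisfy φ and some R_□-successor of w falsifies φ, then there exists an R_□-successor v of w such that every R_{[i]}-successor u of v has some R_{[i]}-successor falsifying φ. -/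
theorem OiR {Ag W : Type} (F : DSFrame Ag W) (i : Ag) (φ : W → Prop) (w : W)
    (h : (∀ u, F.ROb i w u → φ u) ∧ (∃ v, F.RBox w v ∧ ¬ φ v)) :
    ∃ v, F.RBox w v ∧ ∀ u, F.RCh i v u → ∃ t, F.RCh i u t ∧ ¬ φ t := by
  obtain ⟨-, v, hv, hnv⟩ := h
  exact ⟨v, hv, fun u hu => ⟨v, (F.ch_equiv i).symm hu, hnv⟩⟩
end

section
/- In any DS_n-frame satisfying D3 and D5, the formula ⊗_i^d φ → (◇[i]φ ∧ ◇φ ∧ ◇¬φ) (Ought implies Ability and Opportunity) is valid, where ⊗_i^d φ abbreviates ⊗_i φ ∧ ◇¬φ. -/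
theorem OiAO {Ag W : Type} (F : DSFrame Ag W) (i : Ag)
    (D3 : ∀ w v, F.ROb i w v → F.RBox w v)
    (D5 : ∀ w, ∃ v, F.ROb i w v ∧ ∀ u, F.RCh i v u → F.ROb i w u)
    (φ : W → Prop) (w : W)
    (h : (∀ u, F.ROb i w u → φ u) ∧ (∃ v, F.RBox w v ∧ ¬ φ v)) :
    (∃ v, F.RBox w v ∧ ∀ u, F.RCh i v u → φ u) ∧
    (∃ v, F.RBox w v ∧ φ v) ∧ (∃ v, F.RBox w v ∧ ¬ φ v) := by
  obtain ⟨v, hv, hvu⟩ := D5 w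
  exact ⟨⟨v, D3 w v hv, fun u hu => h.1 u (hvu u hu)⟩, ⟨v, D3 w v hv, h.1 v hv⟩, h.2⟩
end

section
/- In any DS_n-frame satisfying D3 and D5, the formula ⊗_i^c φ → (◇[i]φ ∧ ◇[i]¬φ) (Ought implies Control) is valid, where ⊗_i^c φ abbreviates ⊗_i φ ∧ ◇[i]¬φ. -/
theorem OiCtrl {Ag W : Type} (F : DSFrame Ag W) (i : Ag)
    (D3 : ∀ w v, F.ROb i w v → F.RBox w v)
    (D5 : ∀ w, ∃ v, F.ROb i w v ∧ ∀ u, F.RCh i v u → F.ROb i w u)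
    (φ : W → Prop) (w : W)
    (h : (∀ u, F.ROb i w u → φ u) ∧
         (∃ v, F.RBox w v ∧ ∀ u, F.RCh i v u → ¬ φ u)) :
    (∃ v, F.RBox w v ∧ ∀ u, F.RCh i v u → φ u) ∧
    (∃ v, F.RBox w v ∧ ∀ u, F.RCh i v u → ¬ φ u) := by
  obtain ⟨hOb, hneg⟩ := h
  refine ⟨?_, hneg⟩
  obtain ⟨v, hv, hcl⟩ := D5 w
  exact ⟨v, D3 w v hv, fun u hu => hOb u (hcl u hu)⟩
end

section
/- In any DS_n-frame satisfying D3 (R_{⊗_i} ⊆ R_□) and D4 (R_{⊗_i};R_{[i]} ⊆ R_{⊗_i}), the 'normative OiA' formula ⊗_i(⊗_i φ → ◇[i]φ) is valid: for every R_{⊗_i}-successor y of w, if φ holds at all R_{⊗_i}-successors of y, then there is an R_□-successor z of y such that φ holds at all R_{[i]}-successors of z. -/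
theorem NOiA {Ag W : Type} (F : DSFrame Ag W) (i : Ag)
    (D3 : ∀ w v, F.ROb i w v → F.RBox w v)
    (D4 : ∀ w v u, F.ROb i w v → F.RCh i v u → F.ROb i w u)
    (φ : W → Prop) (w : W) :
    ∀ y, F.ROb i w y → ((∀ u, F.ROb i y u → φ u) →
      ∃ z, F.RBox y z ∧ ∀ t, F.RCh i z t → φ t) := by
  intro y hwy h
  exact ⟨y, F.box_equiv.refl y, fun t ht =>
    h t (F.d1 i w y t (D3 w y hwy) (D4 w y t hwy ht))⟩
end

section
/- In any DS_n-frame satisfying D5 (for every w there exists v with R_{⊗_i} w v such that all R_{[i]}-successors of v are R_{⊗_i}-successors of w), the formula ⊗_i φ → ⊖_i ◇[i]φ is valid, where ⊖_i is the existential dual of ⊗_i: if φ holds at all R_{⊗_i}-successors of w, then there exists an R_{⊗_i}-successor v of w such that some R_□-successor u of v has φ true at all its R_{[i]}-successors. -/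
theorem ought_implies_permitted_ability {Ag W : Type} (F : DSFrame Ag W) (i : Ag)
    (D5 : ∀ w, ∃ v, F.ROb i w v ∧ ∀ u, F.RCh i v u → F.ROb i w u)
    (φ : W → Prop) (w : W)
    (h : ∀ u, F.ROb i w u → φ u) :
    ∃ v, F.ROb i w v ∧ ∃ u, F.RBox v u ∧ ∀ t, F.RCh i u t → φ t := by
  obtain ⟨v, hv, hc⟩ := D5 w
  exact ⟨v, hv, v, F.box_equiv.refl v, fun t ht => h t (hc t ht)⟩
end

section
/- There exists a DS_1-frame (single agent) satisfying D2 (seriality of R_{⊗_1}) together with a valuation and a world at which ⊗_1 p → ⊗_1 ◇[1]p fails; hence OiNA is not valid over the class of DS_1-frames with D2. Concretely: take W = {w, v, u, z}, R_{[1]} the equivalence relation with classes {w},{u},{v,z}, R_□ the equivalence relation with classes {w},{u},{v,z}, R_{⊗_1} = {(w,u),(w,v),(u,u),(v,v),(z,v)}, and V(p) = {w, v, u}; then w satisfies ⊗_1 p but not ⊗_1 ◇[1]p. -/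
/-- classes {0}, {2}, {1,3} -/
def myBox (a b : Fin 4) : Prop := a = b ∨ (a = 1 ∧ b = 3) ∨ (a = 3 ∧ b = 1)

def myOb (a b : Fin 4) : Prop :=
  (a = 0 ∧ b = 2) ∨ (a = 0 ∧ b = 1) ∨ (a = 2 ∧ b = 2) ∨
  (a = 1 ∧ b = 1) ∨ (a = 3 ∧ b = 1)

instance : DecidablePred (fun p : Fin 4 × Fin 4 => myBox p.1 p.2) := by
  intro p; unfold myBox; infer_instance

instance (a b : Fin 4) : Decidable (myBox a b) := by unfold myBox; infer_instance
instance (a b : Fin 4) : Decidable (myOb a b) := by unfold myOb; infer_instance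

lemma myBox_symm : ∀ a b : Fin 4, myBox a b → myBox b a := by decide
lemma myBox_trans : ∀ a b c : Fin 4, myBox a b → myBox b c → myBox a c := by decide
lemma my_d1 : ∀ a b c : Fin 4, myBox a b → myOb a c → myOb b c := by decide

/-- There is a single-agent DS-frame satisfying D2, a valuation and a world
at which ⊗₁ p → ⊗₁ ◇[1]p fails (OiNA is not valid over DS₁-frames with D2). -/
theorem OiNA_not_valid_with_D2 :
    ∃ (F : DSFrame Unit (Fin 4)) (V : Fin 4 → Prop) (w : Fin 4),
      (∀ x, ∃ y, F.ROb () x y) ∧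
      (∀ u, F.ROb () w u → V u) ∧
      ¬ (∀ v, F.ROb () w v → ∃ u, F.RBox v u ∧ ∀ t, F.RCh () u t → V t) := by
  refine ⟨{
    nonempty := ⟨0⟩
    RBox := myBox
    RCh := fun _ => myBox
    ROb := fun _ => myOb
    box_equiv := ⟨fun x => Or.inl rfl, fun h => myBox_symm _ _ h,
      fun h1 h2 => myBox_trans _ _ _ h1 h2⟩
    ch_sub := fun _ _ _ h => h
    ch_equiv := fun _ => ⟨fun x => Or.inl rfl, fun h => myBox_symm _ _ h,
      fun h1 h2 => myBox_trans _ _ _ h1 h2⟩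
    indep := fun w u _ => ⟨u (), fun _ => Or.inl rfl⟩
    d1 := fun _ a b c h1 h2 => my_d1 a b c h1 h2 }, fun x => x ≠ 3, 0, ?_, ?_, ?_⟩
  · intro x
    match x with
    | 0 => exact ⟨1, Or.inr (Or.inl ⟨rfl, rfl⟩)⟩
    | 1 => exact ⟨1, Or.inr (Or.inr (Or.inr (Or.inl ⟨rfl, rfl⟩)))⟩
    | 2 => exact ⟨2, Or.inr (Or.inr (Or.inl ⟨rfl, rfl⟩))⟩
    | 3 => exact ⟨1, Or.inr (Or.inr (Or.inr (Or.inr ⟨rfl, rfl⟩)))⟩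
  · simp only
    have : ∀ u : Fin 4, myOb 0 u → u ≠ 3 := by decide
    exact this
  · intro h
    obtain ⟨u, hbox, hall⟩ := h 1 (Or.inr (Or.inl ⟨rfl, rfl⟩))
    have h3 : myBox u 3 := by
      have : ∀ u : Fin 4, myBox 1 u → myBox u 3 := by decide
      exact this u hbox
    exact hall 3 h3 rfl
end
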